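/- Let {μ_j} be a sequence of Radon measures on ℝⁿ with 0 ∈ supp μ_j and μ_j(B(0,1)) ≥ A₁ > 0 for all j, and suppose each μ_j is uniformly doubling: μ_j(B(q,2r)) ≤ A₂ μ_j(B(q,r)) for all j, all q ∈ supp μ_j and r > 0. If μ_j converges weakly to a Radon measure μ_∞, then μ_∞ is doubling and supp μ_j → supp μ_∞ in the local Hausdorff sense. -/

import Mathlib

open MeasureTheory Metric Filter NNReal ENNReal

def msupp {n : ℕ} (μ : Measure (EuclideanSpace ℝ (Fin n))) : Set (EuclideanSpace ℝ (Fin n)) :=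
  {x | ∀ r : ℝ, 0 < r → 0 < μ (ball x r)}

lemma msupp_isClosed {n : ℕ} (μ : Measure (EuclideanSpace ℝ (Fin n))) : IsClosed (msupp μ) := by
  rw [← isOpen_compl_iff, Metric.isOpen_iff]
  intro x hx
  simp only [msupp, Set.mem_compl_iff, Set.mem_setOf_eq, not_forall, not_lt] at hx
  obtain ⟨r, hr, hμ⟩ := hx
  have hμ0 : μ (ball x r) = 0 := le_antisymm hμ zero_le
  refine ⟨r/2, by linarith, fun y hy hy' => ?_⟩
  have h2 := hy' (r/2) (by linarith)
  have hsub : ball y (r/2) ⊆ ball x r := fun z hz => by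
    rw [mem_ball] at *
    have := dist_triangle z y x
    linarith
  exact absurd (lt_of_lt_of_le h2 (measure_mono hsub)) (by simp [hμ0])

lemma null_of_disjoint_msupp {n : ℕ} (μ : Measure (EuclideanSpace ℝ (Fin n)))
    {U : Set (EuclideanSpace ℝ (Fin n))} (hU : ∀ x ∈ U, x ∉ msupp μ) : μ U = 0 := by
  classical
  set S : Set (Set (EuclideanSpace ℝ (Fin n))) :=
    {s | (∃ x r, 0 < r ∧ s = ball x r) ∧ μ s = 0} with hS
  have hopen : ∀ s ∈ S, IsOpen s := by
    rintro s ⟨⟨x, r, _, rfl⟩, _⟩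
    exact isOpen_ball
  obtain ⟨T, hTc, hTS, hTU⟩ := TopologicalSpace.isOpen_sUnion_countable S hopen
  have hUsub : U ⊆ ⋃₀ S := by
    intro x hx
    have := hU x hx
    simp only [msupp, Set.mem_setOf_eq, not_forall, not_lt] at this
    obtain ⟨r, hr, hμ⟩ := this
    exact ⟨ball x r, ⟨⟨x, r, hr, rfl⟩, le_antisymm hμ zero_le⟩, mem_ball_self hr⟩
  have hT0 : μ (⋃₀ T) = 0 :=
    (measure_sUnion_null_iff hTc).2 fun s hs => (hTS hs).2
  refine le_antisymm ?_ zero_le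
  calc μ U ≤ μ (⋃₀ S) := measure_mono hUsub
    _ = μ (⋃₀ T) := by rw [hTU]
    _ = 0 := hT0

lemma exists_bump {n : ℕ} (q : EuclideanSpace ℝ (Fin n)) {a b : ℝ} (ha : 0 ≤ a) (hab : a < b) :
    ∃ f : EuclideanSpace ℝ (Fin n) → ℝ, Continuous f ∧ HasCompactSupport f ∧
      (∀ x, 0 ≤ f x) ∧ (∀ x, f x ≤ 1) ∧ (∀ x, dist x q ≤ a → f x = 1) ∧
      (∀ x, b ≤ dist x q → f x = 0) := by
  have hba : 0 < b - a := by linarith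
  refine ⟨fun x => max 0 (min 1 ((b - dist x q) / (b - a))), ?_, ?_, ?_, ?_, ?_, ?_⟩
  · exact (continuous_const.max (continuous_const.min
      ((continuous_const.sub (continuous_id.dist continuous_const)).div_const _)))
  · apply HasCompactSupport.intro (isCompact_closedBall q b)
    intro x hx
    rw [mem_closedBall, not_le] at hx
    have : (b - dist x q) / (b - a) < 0 := div_neg_of_neg_of_pos (by linarith) hba
    exact max_eq_left (le_trans (min_le_right _ _) this.le)
  · intro x; exact le_max_left _ _
  · intro x; exact max_le zero_le_one (min_le_left _ _)
  · intro x hx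
    have h1 : (1:ℝ) ≤ (b - dist x q) / (b - a) := by
      rw [le_div_iff₀ hba]; linarith
    show (0 ⊔ (1 ⊓ (b - dist x q) / (b - a))) = 1
    rw [min_eq_left h1, max_eq_right zero_le_one]
  · intro x hx
    have : (b - dist x q) / (b - a) ≤ 0 := div_nonpos_of_nonpos_of_nonneg (by linarith) hba.le
    exact max_eq_left (le_trans (min_le_right _ _) this)

lemma meas_le_intBump {n : ℕ} (μ : Measure (EuclideanSpace ℝ (Fin n)))
    [IsFiniteMeasureOnCompacts μ] {f : EuclideanSpace ℝ (Fin n) → ℝ}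
    (hfc : Continuous f) (hfs : HasCompactSupport f) (hf0 : ∀ x, 0 ≤ f x) (_hf1 : ∀ x, f x ≤ 1)
    {s : Set (EuclideanSpace ℝ (Fin n))} (hs : MeasurableSet s) (h1 : ∀ x ∈ s, f x = 1) :
    μ s ≤ ENNReal.ofReal (∫ x, f x ∂μ) := by
  have hint : Integrable f μ := hfc.integrable_of_hasCompactSupport hfs
  rw [ofReal_integral_eq_lintegral_ofReal hint (ae_of_all _ hf0)]
  calc μ s = ∫⁻ x, s.indicator (fun _ => 1) x ∂μ := (lintegral_indicator_one hs).symm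
    _ ≤ ∫⁻ x, ENNReal.ofReal (f x) ∂μ := by
        apply lintegral_mono
        intro x
        by_cases hx : x ∈ s
        · simp [Set.indicator_of_mem hx, h1 x hx]
        · simp [Set.indicator_of_notMem hx]

lemma intBump_le_meas {n : ℕ} (μ : Measure (EuclideanSpace ℝ (Fin n)))
    [IsFiniteMeasureOnCompacts μ] {f : EuclideanSpace ℝ (Fin n) → ℝ}
    (hfc : Continuous f) (hfs : HasCompactSupport f) (hf0 : ∀ x, 0 ≤ f x) (hf1 : ∀ x, f x ≤ 1)
    {U : Set (EuclideanSpace ℝ (Fin n))} (hU : MeasurableSet U) (h0 : ∀ x ∉ U, f x = 0) :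
    ENNReal.ofReal (∫ x, f x ∂μ) ≤ μ U := by
  have hint : Integrable f μ := hfc.integrable_of_hasCompactSupport hfs
  rw [ofReal_integral_eq_lintegral_ofReal hint (ae_of_all _ hf0)]
  calc ∫⁻ x, ENNReal.ofReal (f x) ∂μ ≤ ∫⁻ x, U.indicator (fun _ => 1) x ∂μ := by
        apply lintegral_mono
        intro x
        by_cases hx : x ∈ U
        · simp only [Set.indicator_of_mem hx]
          exact le_trans (ENNReal.ofReal_le_ofReal (hf1 x)) (by simp)
        · simp [Set.indicator_of_notMem hx, h0 x hx]
    _ = μ U := lintegral_indicator_one hU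
theorem stmt2 (n : ℕ) (μ : ℕ → Measure (EuclideanSpace ℝ (Fin n)))
    (μlim : Measure (EuclideanSpace ℝ (Fin n)))
    (hloc : ∀ j, IsFiniteMeasureOnCompacts (μ j)) (hloclim : IsFiniteMeasureOnCompacts μlim)
    (A₁ : ℝ) (hA₁ : 0 < A₁) (A₂ : ℝ≥0)
    (h0 : ∀ j, (0 : EuclideanSpace ℝ (Fin n)) ∈ msupp (μ j))
    (hA1 : ∀ j, ENNReal.ofReal A₁ ≤ μ j (ball 0 1))
    (hdb : ∀ j, ∀ q ∈ msupp (μ j), ∀ r : ℝ, 0 < r →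
      μ j (ball q (2 * r)) ≤ (A₂ : ℝ≥0∞) * μ j (ball q r))
    (hweak : ∀ f : EuclideanSpace ℝ (Fin n) → ℝ, Continuous f → HasCompactSupport f →
      Tendsto (fun j => ∫ x, f x ∂(μ j)) atTop (nhds (∫ x, f x ∂μlim))) :
    (∃ A : ℝ≥0, ∀ q ∈ msupp μlim, ∀ r : ℝ, 0 < r →
      μlim (ball q (2 * r)) ≤ (A : ℝ≥0∞) * μlim (ball q r)) ∧
    (∀ R : ℝ, 0 < R →
      Tendsto (fun j => ⨆ x ∈ msupp (μ j) ∩ ball 0 R, infDist x (msupp μlim)) atTop (nhds 0) ∧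
      Tendsto (fun j => ⨆ x ∈ msupp μlim ∩ ball 0 R, infDist x (msupp (μ j))) atTop (nhds 0)) := by
  classical
  -- A₂ is positive
  have hA₂pos : (0:ℝ≥0) < A₂ := by
    by_contra h
    push_neg at h
    have hA₂0 : A₂ = 0 := le_antisymm h zero_le
    have h1 := hdb 0 0 (h0 0) 1 one_pos
    rw [hA₂0] at h1
    simp only [ENNReal.coe_zero, zero_mul, nonpos_iff_eq_zero] at h1
    exact absurd h1 (h0 0 (2*1) (by norm_num)).ne'
  -- iterated doubling
  have hdbk : ∀ j, ∀ q ∈ msupp (μ j), ∀ r : ℝ, 0 < r → ∀ k : ℕ,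
      μ j (ball q (2^k * r)) ≤ (A₂:ℝ≥0∞)^k * μ j (ball q r) := by
    intro j q hq r hr k
    induction k with
    | zero => simp
    | succ k ih =>
      have h2 : (2:ℝ)^(k+1) * r = 2 * (2^k * r) := by ring
      rw [h2, pow_succ]
      calc μ j (ball q (2*(2^k*r))) ≤ (A₂:ℝ≥0∞) * μ j (ball q (2^k*r)) :=
            hdb j q hq _ (by positivity)
        _ ≤ (A₂:ℝ≥0∞) * ((A₂:ℝ≥0∞)^k * μ j (ball q r)) := mul_le_mul_right ih _
        _ = (A₂:ℝ≥0∞)^k * (A₂:ℝ≥0∞) * μ j (ball q r) := by ring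
  -- uniform lower bound on balls centered on the support
  have hLB : ∀ R r : ℝ, 0 < R → 0 < r → ∃ c : ℝ, 0 < c ∧ ∀ j, ∀ q ∈ msupp (μ j),
      dist q 0 ≤ R → ENNReal.ofReal c ≤ μ j (ball q r) := by
    intro R r hR hr
    obtain ⟨k, hk⟩ := pow_unbounded_of_one_lt ((R+1)/r) (one_lt_two (α := ℝ))
    refine ⟨A₁ / (A₂:ℝ)^k, by positivity, ?_⟩
    intro j q hq hqR
    have h2k : R + 1 < 2^k * r := by
      rw [div_lt_iff₀ hr] at hk; linarith
    have hsub : ball (0 : EuclideanSpace ℝ (Fin n)) 1 ⊆ ball q (2^k * r) := by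
      intro y hy
      rw [mem_ball] at *
      have ht := dist_triangle y (0 : EuclideanSpace ℝ (Fin n)) q
      have hq0 : dist (0 : EuclideanSpace ℝ (Fin n)) q = dist q 0 := dist_comm _ _
      linarith
    have h1 : ENNReal.ofReal A₁ ≤ (A₂:ℝ≥0∞)^k * μ j (ball q r) :=
      le_trans (hA1 j) (le_trans (measure_mono hsub) (hdbk j q hq r hr k))
    have hofr : ENNReal.ofReal (A₁ / (A₂:ℝ)^k) = ENNReal.ofReal A₁ / (A₂:ℝ≥0∞)^k := by
      rw [ENNReal.ofReal_div_of_pos (by positivity), ENNReal.ofReal_pow A₂.coe_nonneg,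
        ENNReal.ofReal_coe_nnreal]
    rw [hofr]
    exact ENNReal.div_le_of_le_mul (by rwa [mul_comm] at h1)
  -- every point of msupp μlim is approximated by points of msupp (μ j)
  have happrox : ∀ q ∈ msupp μlim, ∀ δ : ℝ, 0 < δ →
      ∀ᶠ j in atTop, ∃ p ∈ msupp (μ j), dist p q < δ := by
    intro q hq δ hδ
    by_contra hcon
    rw [Filter.not_eventually] at hcon
    obtain ⟨φ, hφ, hφP⟩ := Filter.extraction_of_frequently_atTop hcon
    obtain ⟨f, hfc, hfs, hf0, hf1, hfone, hfzero⟩ :=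
      exists_bump q (le_of_lt (show (0:ℝ) < δ/4 by linarith)) (show δ/4 < δ/2 by linarith)
    have hnull : ∀ k, μ (φ k) (ball q δ) = 0 := by
      intro k
      refine null_of_disjoint_msupp _ (fun x hx hmem => hφP k ⟨x, hmem, ?_⟩)
      rwa [mem_ball] at hx
    have hint0 : ∀ k, ∫ x, f x ∂(μ (φ k)) = 0 := by
      intro k
      haveI := hloc (φ k)
      have hle : ENNReal.ofReal (∫ x, f x ∂(μ (φ k))) ≤ μ (φ k) (ball q (δ/2)) :=
        intBump_le_meas _ hfc hfs hf0 hf1 measurableSet_ball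
          (fun x hx => hfzero x (le_of_not_gt (fun h => hx (mem_ball.2 h))))
      have h2 : ENNReal.ofReal (∫ x, f x ∂(μ (φ k))) = 0 :=
        le_antisymm (hle.trans (le_trans (measure_mono (ball_subset_ball (by linarith)))
          (le_of_eq (hnull k)))) zero_le
      rw [ENNReal.ofReal_eq_zero] at h2
      exact le_antisymm h2 (integral_nonneg hf0)
    have hlim : Tendsto (fun k => ∫ x, f x ∂(μ (φ k))) atTop (nhds (∫ x, f x ∂μlim)) :=
      (hweak f hfc hfs).comp hφ.tendsto_atTop
    have hz : (∫ x, f x ∂μlim) = 0 :=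
      tendsto_nhds_unique hlim (by simpa [hint0] using tendsto_const_nhds (α := ℝ) (f := atTop (α := ℕ)))
    have hcb : μlim (closedBall q (δ/4)) = 0 := by
      have h3 := meas_le_intBump μlim hfc hfs hf0 hf1 measurableSet_closedBall
        (fun x hx => hfone x (mem_closedBall.1 hx))
      rw [hz] at h3
      simpa using h3
    have h4 := hq (δ/4) (by linarith)
    rw [← nonpos_iff_eq_zero] at hcb
    exact absurd (lt_of_lt_of_le h4 (le_trans (measure_mono ball_subset_closedBall) hcb))
      (lt_irrefl 0)
  -- doubling step for the limit measure on closed balls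
  have hstep : ∀ q ∈ msupp μlim, ∀ s : ℝ, 0 < s → ∀ a : ℝ, 0 < a → a < 2*s →
      μlim (closedBall q a) ≤ (A₂:ℝ≥0∞) * μlim (ball q s) := by
    intro q hq s hs a ha has
    set δ : ℝ := (2*s - a)/6 with hδdef
    have hδ : 0 < δ := by rw [hδdef]; linarith
    set t : ℝ := a/2 + δ with htdef
    have ht : 0 < t := by rw [htdef]; linarith
    obtain ⟨f, hfc, hfs, hf0, hf1, hfone, hfzero⟩ :=
      exists_bump q ha.le (show a < a + δ by linarith)
    obtain ⟨g, hgc, hgs, hg0, hg1, hgone, hgzero⟩ :=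
      exists_bump q (show (0:ℝ) ≤ t + δ by linarith) (show t + δ < t + 2*δ by linarith)
    have hev : ∀ᶠ j in atTop, ∫ x, f x ∂(μ j) ≤ (A₂:ℝ) * ∫ x, g x ∂(μ j) := by
      filter_upwards [happrox q hq δ hδ] with j hj
      obtain ⟨p, hp, hpq⟩ := hj
      haveI := hloc j
      have h1 : ENNReal.ofReal (∫ x, f x ∂μ j) ≤ μ j (ball q (a+δ)) :=
        intBump_le_meas _ hfc hfs hf0 hf1 measurableSet_ball
          (fun x hx => hfzero x (le_of_not_gt (fun h => hx (mem_ball.2 h))))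
      have h2 : ball q (a+δ) ⊆ ball p (a+2*δ) := by
        intro y hy
        rw [mem_ball] at *
        have := dist_triangle y q p
        have : dist q p = dist p q := dist_comm _ _
        calc dist y p ≤ dist y q + dist q p := dist_triangle y q p
          _ < a + δ + δ := by rw [this]; linarith
          _ = a + 2*δ := by ring
      have h3 : μ j (ball p (a+2*δ)) ≤ (A₂:ℝ≥0∞) * μ j (ball p t) := by
        have he : a + 2*δ = 2*t := by rw [htdef]; ring
        rw [he]
        exact hdb j p hp t ht
      have h4 : ball p t ⊆ closedBall q (t+δ) := by
        intro y hy
        rw [mem_ball] at hy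
        rw [mem_closedBall]
        calc dist y q ≤ dist y p + dist p q := dist_triangle y p q
          _ ≤ t + δ := by linarith
      have h5 : μ j (closedBall q (t+δ)) ≤ ENNReal.ofReal (∫ x, g x ∂μ j) :=
        meas_le_intBump _ hgc hgs hg0 hg1 measurableSet_closedBall
          (fun x hx => hgone x (mem_closedBall.1 hx))
      have hchain : ENNReal.ofReal (∫ x, f x ∂μ j) ≤
          (A₂:ℝ≥0∞) * ENNReal.ofReal (∫ x, g x ∂μ j) :=
        h1.trans ((measure_mono h2).trans (h3.trans (mul_le_mul_right
          ((measure_mono h4).trans h5) _)))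
      have hA : (A₂:ℝ≥0∞) * ENNReal.ofReal (∫ x, g x ∂μ j)
          = ENNReal.ofReal ((A₂:ℝ) * ∫ x, g x ∂μ j) := by
        rw [ENNReal.ofReal_mul A₂.coe_nonneg, ENNReal.ofReal_coe_nnreal]
      rw [hA] at hchain
      exact (ENNReal.ofReal_le_ofReal_iff
        (mul_nonneg A₂.coe_nonneg (integral_nonneg hg0))).1 hchain
    have hlim : ∫ x, f x ∂μlim ≤ (A₂:ℝ) * ∫ x, g x ∂μlim :=
      le_of_tendsto_of_tendsto (hweak f hfc hfs) ((hweak g hgc hgs).const_mul _) hev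
    calc μlim (closedBall q a) ≤ ENNReal.ofReal (∫ x, f x ∂μlim) :=
          meas_le_intBump μlim hfc hfs hf0 hf1 measurableSet_closedBall
            (fun x hx => hfone x (mem_closedBall.1 hx))
      _ ≤ ENNReal.ofReal ((A₂:ℝ) * ∫ x, g x ∂μlim) := ENNReal.ofReal_le_ofReal hlim
      _ = (A₂:ℝ≥0∞) * ENNReal.ofReal (∫ x, g x ∂μlim) := by
          rw [ENNReal.ofReal_mul A₂.coe_nonneg, ENNReal.ofReal_coe_nnreal]
      _ ≤ (A₂:ℝ≥0∞) * μlim (ball q (t+2*δ)) := by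
          refine mul_le_mul_right ?_ _
          exact intBump_le_meas μlim hgc hgs hg0 hg1 measurableSet_ball
            (fun x hx => hgzero x (le_of_not_gt (fun h => hx (mem_ball.2 h))))
      _ = (A₂:ℝ≥0∞) * μlim (ball q s) := by
          have : t + 2*δ = s := by rw [htdef, hδdef]; ring
          rw [this]
  -- doubling for the limit measure
  have hdoub : ∀ q ∈ msupp μlim, ∀ r : ℝ, 0 < r →
      μlim (ball q (2*r)) ≤ (A₂:ℝ≥0∞) * μlim (ball q r) := by
    intro q hq r hr
    have hunion : ball q (2*r) = ⋃ m : ℕ, closedBall q (2*r - 2*r/(m+2)) := by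
      ext y
      simp only [mem_ball, Set.mem_iUnion, mem_closedBall]
      constructor
      · intro h
        obtain ⟨m, hm⟩ := exists_nat_gt (2*r/(2*r - dist y q))
        refine ⟨m, ?_⟩
        have h1 : 0 < 2*r - dist y q := by linarith
        have h2 : 2*r/((m:ℝ)+2) < 2*r - dist y q := by
          rw [div_lt_iff₀ (show (0:ℝ) < (m:ℝ)+2 by positivity)]
          rw [div_lt_iff₀ h1] at hm
          nlinarith [dist_nonneg (x := y) (y := q), (Nat.cast_nonneg m : (0:ℝ) ≤ m)]
        linarith
      · rintro ⟨m, hm⟩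
        have : 0 < 2*r/((m:ℝ)+2) := by positivity
        linarith
    rw [hunion, Directed.measure_iUnion]
    · refine iSup_le fun m => ?_
      have hle : 2*r/((m:ℝ)+2) ≤ r := by
        rw [div_le_iff₀ (by positivity)]
        nlinarith [(Nat.cast_nonneg m : (0:ℝ) ≤ m)]
      have hpos : 0 < 2*r - 2*r/((m:ℝ)+2) := by linarith
      have hlt : 2*r - 2*r/((m:ℝ)+2) < 2*r := by
        have : 0 < 2*r/((m:ℝ)+2) := by positivity
        linarith
      exact hstep q hq r hr _ hpos hlt
    · have hmono : Monotone (fun m : ℕ => closedBall q (2*r - 2*r/(m+2))) := by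
        intro m m' hmm
        apply closedBall_subset_closedBall
        have h1 : ((m:ℝ)+2) ≤ ((m':ℝ)+2) := by
          have := Nat.cast_le (α := ℝ) |>.2 hmm
          linarith
        have := div_le_div_of_nonneg_left (by linarith : (0:ℝ) ≤ 2*r) (by positivity : (0:ℝ) < (m:ℝ)+2) h1
        linarith
      exact hmono.directed_le
  -- direction 1 : points of msupp (μ j) near msupp μlim
  have hdir1 : ∀ R : ℝ, 0 < R →
      Tendsto (fun j => ⨆ x ∈ msupp (μ j) ∩ ball 0 R, infDist x (msupp μlim)) atTop (nhds 0) := by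
    intro R hR
    have hnonneg : ∀ j, 0 ≤ ⨆ x ∈ msupp (μ j) ∩ ball 0 R, infDist x (msupp μlim) :=
      fun j => Real.iSup_nonneg fun x => Real.iSup_nonneg fun _ => infDist_nonneg
    rw [show (nhds (0:ℝ)) = nhds 0 from rfl]
    refine tendsto_order.2 ⟨fun a ha => Filter.Eventually.of_forall fun j => lt_of_lt_of_le ha (hnonneg j), ?_⟩
    intro ε hε
    have claim : ∀ᶠ j in atTop, ∀ x ∈ msupp (μ j) ∩ ball (0 : EuclideanSpace ℝ (Fin n)) R,
        infDist x (msupp μlim) ≤ ε/2 := by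
      by_contra hcon
      rw [Filter.not_eventually] at hcon
      obtain ⟨φ, hφ, hφP⟩ := Filter.extraction_of_frequently_atTop hcon
      have hφP' : ∀ k, ∃ x, x ∈ msupp (μ (φ k)) ∩ ball (0 : EuclideanSpace ℝ (Fin n)) R ∧
          ε/2 < infDist x (msupp μlim) := by
        intro k
        have := hφP k
        push_neg at this
        obtain ⟨x, hx1, hx2⟩ := this
        exact ⟨x, hx1, hx2⟩
      choose x hx1 hx2 using hφP'
      have hxball : ∀ k, x k ∈ closedBall (0 : EuclideanSpace ℝ (Fin n)) R :=
        fun k => ball_subset_closedBall (hx1 k).2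
      obtain ⟨z, hz, ψ, hψ, hxz⟩ :=
        (isCompact_closedBall (0 : EuclideanSpace ℝ (Fin n)) R).tendsto_subseq hxball
      have hzmem : z ∈ msupp μlim := by
        intro r hr
        obtain ⟨c, hc, hcLB⟩ := hLB (R+1) (r/4) (by linarith) (by linarith)
        obtain ⟨f, hfc, hfs, hf0, hf1, hfone, hfzero⟩ :=
          exists_bump z (show (0:ℝ) ≤ r/2 by linarith) (show r/2 < r by linarith)
        have hev : ∀ᶠ k in atTop, c ≤ ∫ y, f y ∂(μ (φ (ψ k))) := by
          have hdist : ∀ᶠ k in atTop, dist (x (ψ k)) z < r/4 := by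
            have := hxz
            rw [Metric.tendsto_atTop] at this
            obtain ⟨N, hN⟩ := this (r/4) (by linarith)
            exact Filter.eventually_atTop.2 ⟨N, fun k hk => hN k hk⟩
          filter_upwards [hdist] with k hk
          haveI := hloc (φ (ψ k))
          have hq : x (ψ k) ∈ msupp (μ (φ (ψ k))) := (hx1 (ψ k)).1
          have hqR : dist (x (ψ k)) 0 ≤ R + 1 := by
            have := mem_ball.1 (hx1 (ψ k)).2
            linarith
          have h1 : ENNReal.ofReal c ≤ μ (φ (ψ k)) (ball (x (ψ k)) (r/4)) :=
            hcLB (φ (ψ k)) _ hq hqR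
          have h2 : ball (x (ψ k)) (r/4) ⊆ closedBall z (r/2) := by
            intro y hy
            rw [mem_ball] at hy
            rw [mem_closedBall]
            calc dist y z ≤ dist y (x (ψ k)) + dist (x (ψ k)) z := dist_triangle _ _ _
              _ ≤ r/2 := by linarith
          have h3 : μ (φ (ψ k)) (closedBall z (r/2)) ≤
              ENNReal.ofReal (∫ y, f y ∂(μ (φ (ψ k)))) :=
            meas_le_intBump _ hfc hfs hf0 hf1 measurableSet_closedBall
              (fun y hy => hfone y (mem_closedBall.1 hy))
          have := h1.trans ((measure_mono h2).trans h3)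
          exact (ENNReal.ofReal_le_ofReal_iff (integral_nonneg hf0)).1 this
        have hlim : Tendsto (fun k => ∫ y, f y ∂(μ (φ (ψ k)))) atTop (nhds (∫ y, f y ∂μlim)) :=
          (hweak f hfc hfs).comp ((hφ.comp hψ).tendsto_atTop)
        have hcle : c ≤ ∫ y, f y ∂μlim := ge_of_tendsto hlim hev
        have h4 : ENNReal.ofReal (∫ y, f y ∂μlim) ≤ μlim (ball z r) :=
          intBump_le_meas μlim hfc hfs hf0 hf1 measurableSet_ball
            (fun y hy => hfzero y (le_of_not_gt (fun h => hy (mem_ball.2 h))))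
        calc (0:ℝ≥0∞) < ENNReal.ofReal c := ENNReal.ofReal_pos.2 hc
          _ ≤ ENNReal.ofReal (∫ y, f y ∂μlim) := ENNReal.ofReal_le_ofReal hcle
          _ ≤ μlim (ball z r) := h4
      have hinf0 : infDist z (msupp μlim) = 0 := infDist_zero_of_mem hzmem
      have hlim2 : Tendsto (fun k => infDist (x (ψ k)) (msupp μlim)) atTop
          (nhds (infDist z (msupp μlim))) :=
        ((continuous_infDist_pt (msupp μlim)).continuousAt.tendsto).comp hxz
      have : ε/2 ≤ infDist z (msupp μlim) :=
        ge_of_tendsto hlim2 (Filter.Eventually.of_forall fun k => (hx2 (ψ k)).le)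
      rw [hinf0] at this
      linarith
    filter_upwards [claim] with j hj
    have : (⨆ x ∈ msupp (μ j) ∩ ball (0 : EuclideanSpace ℝ (Fin n)) R,
        infDist x (msupp μlim)) ≤ ε/2 :=
      Real.iSup_le (fun x => Real.iSup_le (fun hx => hj x hx) (by linarith)) (by linarith)
    exact lt_of_le_of_lt this (by linarith)
  -- direction 2 : points of msupp μlim near msupp (μ j)
  have hdir2 : ∀ R : ℝ, 0 < R →
      Tendsto (fun j => ⨆ x ∈ msupp μlim ∩ ball 0 R, infDist x (msupp (μ j))) atTop (nhds 0) := by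
    intro R hR
    have hnonneg : ∀ j, 0 ≤ ⨆ x ∈ msupp μlim ∩ ball 0 R, infDist x (msupp (μ j)) :=
      fun j => Real.iSup_nonneg fun x => Real.iSup_nonneg fun _ => infDist_nonneg
    refine tendsto_order.2 ⟨fun a ha => Filter.Eventually.of_forall fun j => lt_of_lt_of_le ha (hnonneg j), ?_⟩
    intro ε hε
    have claim : ∀ᶠ j in atTop, ∀ x ∈ msupp μlim ∩ ball (0 : EuclideanSpace ℝ (Fin n)) R,
        infDist x (msupp (μ j)) ≤ ε/2 := by
      by_contra hcon
      rw [Filter.not_eventually] at hcon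
      obtain ⟨φ, hφ, hφP⟩ := Filter.extraction_of_frequently_atTop hcon
      have hφP' : ∀ k, ∃ x, x ∈ msupp μlim ∩ ball (0 : EuclideanSpace ℝ (Fin n)) R ∧
          ε/2 < infDist x (msupp (μ (φ k))) := by
        intro k
        have := hφP k
        push_neg at this
        obtain ⟨x, hx1, hx2⟩ := this
        exact ⟨x, hx1, hx2⟩
      choose x hx1 hx2 using hφP'
      have hxball : ∀ k, x k ∈ closedBall (0 : EuclideanSpace ℝ (Fin n)) R :=
        fun k => ball_subset_closedBall (hx1 k).2
      obtain ⟨z, hz, ψ, hψ, hxz⟩ :=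
        (isCompact_closedBall (0 : EuclideanSpace ℝ (Fin n)) R).tendsto_subseq hxball
      have hzmem : z ∈ msupp μlim :=
        (msupp_isClosed μlim).mem_of_tendsto hxz
          (Filter.Eventually.of_forall fun k => (hx1 (ψ k)).1)
      obtain ⟨f, hfc, hfs, hf0, hf1, hfone, hfzero⟩ :=
        exists_bump z (show (0:ℝ) ≤ ε/16 by linarith) (show ε/16 < ε/8 by linarith)
      have hdist : ∀ᶠ k in atTop, dist (x (ψ k)) z < ε/8 := by
        have := hxz
        rw [Metric.tendsto_atTop] at this
        obtain ⟨N, hN⟩ := this (ε/8) (by linarith)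
        exact Filter.eventually_atTop.2 ⟨N, fun k hk => hN k hk⟩
      have hev : ∀ᶠ k in atTop, ∫ y, f y ∂(μ (φ (ψ k))) = 0 := by
        filter_upwards [hdist] with k hk
        haveI := hloc (φ (ψ k))
        have hnull : μ (φ (ψ k)) (ball z (ε/4)) = 0 := by
          refine null_of_disjoint_msupp _ (fun y hy hmem => ?_)
          rw [mem_ball] at hy
          have h1 : dist (x (ψ k)) y ≤ dist (x (ψ k)) z + dist z y := dist_triangle _ _ _
          have h2 : dist z y = dist y z := dist_comm _ _
          have h3 : infDist (x (ψ k)) (msupp (μ (φ (ψ k)))) ≤ dist (x (ψ k)) y :=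
            infDist_le_dist_of_mem hmem
          have := hx2 (ψ k)
          rw [h2] at h1
          linarith
        have hle : ENNReal.ofReal (∫ y, f y ∂(μ (φ (ψ k)))) ≤ μ (φ (ψ k)) (ball z (ε/8)) :=
          intBump_le_meas _ hfc hfs hf0 hf1 measurableSet_ball
            (fun y hy => hfzero y (le_of_not_gt (fun h => hy (mem_ball.2 h))))
        have h4 : ENNReal.ofReal (∫ y, f y ∂(μ (φ (ψ k)))) = 0 :=
          le_antisymm (hle.trans (le_trans (measure_mono (ball_subset_ball (by linarith)))
            (le_of_eq hnull))) zero_le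
        rw [ENNReal.ofReal_eq_zero] at h4
        exact le_antisymm h4 (integral_nonneg hf0)
      have hlim : Tendsto (fun k => ∫ y, f y ∂(μ (φ (ψ k)))) atTop (nhds (∫ y, f y ∂μlim)) :=
        (hweak f hfc hfs).comp ((hφ.comp hψ).tendsto_atTop)
      have hz0 : (∫ y, f y ∂μlim) = 0 :=
        tendsto_nhds_unique hlim (Tendsto.congr' (hev.mono fun k hk => hk.symm) tendsto_const_nhds)
      have hcb : μlim (closedBall z (ε/16)) = 0 := by
        have h3 := meas_le_intBump μlim hfc hfs hf0 hf1 measurableSet_closedBall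
          (fun y hy => hfone y (mem_closedBall.1 hy))
        rw [hz0] at h3
        simpa using h3
      have h5 := hzmem (ε/16) (by linarith)
      rw [← nonpos_iff_eq_zero] at hcb
      exact absurd (lt_of_lt_of_le h5 (le_trans (measure_mono ball_subset_closedBall) hcb))
        (lt_irrefl 0)
    filter_upwards [claim] with j hj
    have : (⨆ x ∈ msupp μlim ∩ ball (0 : EuclideanSpace ℝ (Fin n)) R,
        infDist x (msupp (μ j))) ≤ ε/2 :=
      Real.iSup_le (fun x => Real.iSup_le (fun hx => hj x hx) (by linarith)) (by linarith)
    exact lt_of_le_of_lt this (by linarith)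
  exact ⟨⟨A₂, hdoub⟩, fun R hR => ⟨hdir1 R hR, hdir2 R hR⟩⟩
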